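/- Let g_β(r) = (C₀ - log r)^β with C₀ > 0 and β ∈ (0,1), and n > 2. Then the radial biharmonic operator applied to r² g_β satisfies Δ²(r² g_β)(r) ≤ β r^{-2} · 2n(n-2) · g_{β-1}(r) for all r ∈ (0,1) with C₀ - log r ≥ 1. -/

import Mathlib

open Real Filter

private lemma hasDerivAt_Lpow (C₀ α s : ℝ) (hs : 0 < s) (hL : 0 < C₀ - Real.log s) :
    HasDerivAt (fun t => (C₀ - Real.log t) ^ α)
      (-(α * (C₀ - Real.log s) ^ (α - 1) / s)) s := by
  have h1 : HasDerivAt (fun t => C₀ - Real.log t) (-s⁻¹) s :=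
    (Real.hasDerivAt_log hs.ne').const_sub C₀
  have h2 := h1.rpow_const (p := α) (Or.inl hL.ne')
  convert h2 using 1
  field_simp

/-- The radial Laplacian in dimension `n`: `Δf(r) = f''(r) + ((n-1)/r) f'(r)`. -/
noncomputable def radLap (n : ℕ) (f : ℝ → ℝ) (r : ℝ) : ℝ :=
  deriv (deriv f) r + ((n : ℝ) - 1) / r * deriv f r

/-- `g_β(r) = (C₀ - log r)^β`. -/
noncomputable def gfun (C₀ β : ℝ) (r : ℝ) : ℝ := (C₀ - Real.log r) ^ β

/-- For `β ∈ (0,1)`, `n > 2` and `C₀ > 0`, the radial biharmonic operator satisfies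
`Δ²(r² g_β)(r) ≤ β r⁻² · 2n(n-2) · g_{β-1}(r)` for `r ∈ (0,1)` with `C₀ - log r ≥ 1`. -/
theorem stmt_7 (n : ℕ) (hn : 2 < n) (C₀ β : ℝ) (hC₀ : 0 < C₀) (hβ : β ∈ Set.Ioo (0:ℝ) 1)
    (r : ℝ) (hr : r ∈ Set.Ioo (0:ℝ) 1) (hlog : 1 ≤ C₀ - Real.log r) :
    radLap n (radLap n (fun s => s ^ 2 * gfun C₀ β s)) r ≤
      β * r ^ (-2 : ℤ) * (2 * n * ((n : ℝ) - 2)) * gfun C₀ (β - 1) r := by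
  obtain ⟨hβ0, hβ1⟩ := hβ
  obtain ⟨hr0, hr1⟩ := hr
  have hLr : 0 < C₀ - Real.log r := lt_of_lt_of_le one_pos hlog
  -- the open region
  have hev : ∀ s : ℝ, 0 < s → 0 < C₀ - Real.log s →
      ∀ᶠ t in nhds s, 0 < t ∧ 0 < C₀ - Real.log t := by
    intro s hs hL
    have h1 : ∀ᶠ t in nhds s, 0 < t := eventually_gt_nhds hs
    have hc : ContinuousAt (fun t => C₀ - Real.log t) s :=
      continuousAt_const.sub (Real.continuousAt_log hs.ne')
    have h2 : ∀ᶠ t in nhds s, 0 < C₀ - Real.log t :=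
      hc.eventually (eventually_gt_nhds hL)  -- may need fixing
    exact h1.and h2
  set F : ℝ → ℝ := fun s => s ^ 2 * gfun C₀ β s with hF
  set F1 : ℝ → ℝ := fun s =>
    2 * s * (C₀ - Real.log s) ^ β - β * s * (C₀ - Real.log s) ^ (β - 1) with hF1def
  -- first derivative of F
  have hdF : ∀ s : ℝ, 0 < s → 0 < C₀ - Real.log s → HasDerivAt F (F1 s) s := by
    intro s hs hL
    have h1 : HasDerivAt (fun t : ℝ => t ^ 2) (2 * s) s := by
      simpa using hasDerivAt_pow 2 s
    have h2 := hasDerivAt_Lpow C₀ β s hs hL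
    have h3 := h1.fun_mul h2
    simp only [hF, gfun]
    refine h3.congr_deriv ?_
    simp only [hF1def]
    field_simp
    ring
  have hF1' : ∀ s : ℝ, 0 < s → 0 < C₀ - Real.log s → deriv F s = F1 s :=
    fun s hs hL => (hdF s hs hL).deriv
  -- second derivative of F
  set F2 : ℝ → ℝ := fun s =>
    2 * (C₀ - Real.log s) ^ β - 3 * β * (C₀ - Real.log s) ^ (β - 1)
      + β * (β - 1) * (C₀ - Real.log s) ^ (β - 2) with hF2def
  have hdF1 : ∀ s : ℝ, 0 < s → 0 < C₀ - Real.log s → HasDerivAt F1 (F2 s) s := by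
    intro s hs hL
    have h1 : HasDerivAt (fun t : ℝ => 2 * t) (2 : ℝ) s := by
      simpa using (hasDerivAt_id s).const_mul (2 : ℝ)
    have h2 := hasDerivAt_Lpow C₀ β s hs hL
    have h3 : HasDerivAt (fun t : ℝ => β * t) (β : ℝ) s := by
      simpa using (hasDerivAt_id s).const_mul β
    have h4 := hasDerivAt_Lpow C₀ (β - 1) s hs hL
    rw [show β - 1 - 1 = β - 2 by ring] at h4
    have h5 := (h1.fun_mul h2).fun_sub (h3.fun_mul h4)
    simp only [hF1def, hF2def]
    refine h5.congr_deriv ?_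
    field_simp
    ring
  have hF2' : ∀ s : ℝ, 0 < s → 0 < C₀ - Real.log s → deriv (deriv F) s = F2 s := by
    intro s hs hL
    have heq : deriv F =ᶠ[nhds s] F1 :=
      (hev s hs hL).mono fun t ⟨h1, h2⟩ => hF1' t h1 h2
    rw [heq.deriv_eq]
    exact (hdF1 s hs hL).deriv
  -- radLap n F = G on the region
  set G : ℝ → ℝ := fun s =>
    2 * n * (C₀ - Real.log s) ^ β - (n + 2) * β * (C₀ - Real.log s) ^ (β - 1)
      + β * (β - 1) * (C₀ - Real.log s) ^ (β - 2) with hGdef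
  have hG' : ∀ s : ℝ, 0 < s → 0 < C₀ - Real.log s → radLap n F s = G s := by
    intro s hs hL
    rw [radLap, hF1' s hs hL, hF2' s hs hL]
    simp only [hF1def, hF2def, hGdef]
    field_simp
    ring
  -- derivative of G
  set Ginner : ℝ → ℝ := fun s =>
    -(2 * n * β * (C₀ - Real.log s) ^ (β - 1))
      + (n + 2) * β * (β - 1) * (C₀ - Real.log s) ^ (β - 2)
      - β * (β - 1) * (β - 2) * (C₀ - Real.log s) ^ (β - 3) with hGinner
  set G1 : ℝ → ℝ := fun s => Ginner s / s with hG1def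
  have hdG : ∀ s : ℝ, 0 < s → 0 < C₀ - Real.log s → HasDerivAt G (G1 s) s := by
    intro s hs hL
    have h1 := (hasDerivAt_Lpow C₀ β s hs hL).const_mul (2 * (n : ℝ))
    have h2 := (hasDerivAt_Lpow C₀ (β - 1) s hs hL).const_mul (((n : ℝ) + 2) * β)
    rw [show β - 1 - 1 = β - 2 by ring] at h2
    have h3 := (hasDerivAt_Lpow C₀ (β - 2) s hs hL).const_mul (β * (β - 1))
    rw [show β - 2 - 1 = β - 3 by ring] at h3
    have h5 := (h1.fun_sub h2).fun_add h3
    simp only [hGdef]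
    refine h5.congr_deriv ?_
    simp only [hG1def, hGinner]
    field_simp
    ring
  have hG1' : ∀ s : ℝ, 0 < s → 0 < C₀ - Real.log s → deriv G s = G1 s :=
    fun s hs hL => (hdG s hs hL).deriv
  -- second derivative of G
  set Ginner' : ℝ → ℝ := fun s =>
    (2 * n * β * (β - 1) * (C₀ - Real.log s) ^ (β - 2)
      - (n + 2) * β * (β - 1) * (β - 2) * (C₀ - Real.log s) ^ (β - 3)
      + β * (β - 1) * (β - 2) * (β - 3) * (C₀ - Real.log s) ^ (β - 4)) / s with hGinner'
  have hdGinner : ∀ s : ℝ, 0 < s → 0 < C₀ - Real.log s → HasDerivAt Ginner (Ginner' s) s := by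
    intro s hs hL
    have h1 := (hasDerivAt_Lpow C₀ (β - 1) s hs hL).const_mul (2 * (n : ℝ) * β)
    rw [show β - 1 - 1 = β - 2 by ring] at h1
    have h2 := (hasDerivAt_Lpow C₀ (β - 2) s hs hL).const_mul (((n : ℝ) + 2) * β * (β - 1))
    rw [show β - 2 - 1 = β - 3 by ring] at h2
    have h3 := (hasDerivAt_Lpow C₀ (β - 3) s hs hL).const_mul (β * (β - 1) * (β - 2))
    rw [show β - 3 - 1 = β - 4 by ring] at h3
    have h5 := (h1.fun_neg.fun_add h2).fun_sub h3
    simp only [hGinner]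
    refine h5.congr_deriv ?_
    simp only [hGinner']
    field_simp
    ring
  set G2 : ℝ → ℝ := fun s => (Ginner' s * s - Ginner s) / s ^ 2 with hG2def
  have hdG1 : ∀ s : ℝ, 0 < s → 0 < C₀ - Real.log s → HasDerivAt G1 (G2 s) s := by
    intro s hs hL
    have h := (hdGinner s hs hL).div (hasDerivAt_id s) hs.ne'
    simp only [id_eq, mul_one] at h
    exact h
  -- now identify radLap n (radLap n F) r
  have hH : radLap n F =ᶠ[nhds r] G :=
    (hev r hr0 hLr).mono fun t ⟨h1, h2⟩ => hG' t h1 h2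
  have hderivH : ∀ s : ℝ, 0 < s → 0 < C₀ - Real.log s → deriv (radLap n F) s = G1 s := by
    intro s hs hL
    have heq : radLap n F =ᶠ[nhds s] G :=
      (hev s hs hL).mono fun t ⟨h1, h2⟩ => hG' t h1 h2
    rw [heq.deriv_eq, hG1' s hs hL]
  have hderiv2H : deriv (deriv (radLap n F)) r = G2 r := by
    have heq : deriv (radLap n F) =ᶠ[nhds r] G1 :=
      (hev r hr0 hLr).mono fun t ⟨h1, h2⟩ => hderivH t h1 h2
    rw [heq.deriv_eq]
    exact (hdG1 r hr0 hLr).deriv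
  have hfinal : radLap n (radLap n F) r = G2 r + ((n : ℝ) - 1) / r * G1 r := by
    rw [radLap, hderiv2H, hderivH r hr0 hLr]
  rw [hfinal]
  -- the final inequality
  set L := C₀ - Real.log r with hLdef
  have hA1 : (0:ℝ) < L ^ (β - 1) := Real.rpow_pos_of_pos hLr _
  have hA2 : (0:ℝ) < L ^ (β - 2) := Real.rpow_pos_of_pos hLr _
  have hA3 : (0:ℝ) < L ^ (β - 3) := Real.rpow_pos_of_pos hLr _
  have hA4 : (0:ℝ) < L ^ (β - 4) := Real.rpow_pos_of_pos hLr _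
  have hn2 : (2:ℝ) < (n : ℝ) := by exact_mod_cast hn
  have hrhs : 0 ≤ β * r ^ (-2 : ℤ) * (2 * n * ((n : ℝ) - 2)) * gfun C₀ (β - 1) r := by
    have h1 : (0:ℝ) < r ^ (-2 : ℤ) := zpow_pos hr0 _
    have h2 : (0:ℝ) < gfun C₀ (β - 1) r := Real.rpow_pos_of_pos hLr _
    have h3 : (0:ℝ) < 2 * n * ((n : ℝ) - 2) := by nlinarith [hn2]
    exact le_of_lt (mul_pos (mul_pos (mul_pos hβ0 h1) h3) h2)
  have hlhs : G2 r + ((n : ℝ) - 1) / r * G1 r ≤ 0 := by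
    have hexp : G2 r + ((n : ℝ) - 1) / r * G1 r =
        (2 * n * (2 - n) * β * L ^ (β - 1)
          + (β - 1) * (2 * n + n ^ 2 - 4) * β * L ^ (β - 2)
          - 2 * n * (β - 1) * (β - 2) * β * L ^ (β - 3)
          + (β - 1) * (β - 2) * (β - 3) * β * L ^ (β - 4)) / r ^ 2 := by
      simp only [hG2def, hG1def, hGinner', hGinner, ← hLdef]
      field_simp
      ring
    rw [hexp]
    apply div_nonpos_of_nonpos_of_nonneg _ (by positivity)
    have hnpos : (0:ℝ) < (n:ℝ) := by linarith
    have t1 : (0:ℝ) < 2 * (n:ℝ) * ((n:ℝ) - 2) * (β * L ^ (β - 1)) :=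
      mul_pos (mul_pos (mul_pos two_pos hnpos) (by linarith)) (mul_pos hβ0 hA1)
    have t2 : (0:ℝ) < (1 - β) * (2 * (n:ℝ) + (n:ℝ) ^ 2 - 4) * (β * L ^ (β - 2)) :=
      mul_pos (mul_pos (by linarith) (by nlinarith)) (mul_pos hβ0 hA2)
    have t3 : (0:ℝ) < 2 * (n:ℝ) * ((1 - β) * ((2 - β) * (β * L ^ (β - 3)))) :=
      mul_pos (mul_pos two_pos hnpos)
        (mul_pos (by linarith) (mul_pos (by linarith) (mul_pos hβ0 hA3)))
    have t4 : (0:ℝ) < (1 - β) * ((2 - β) * ((3 - β) * (β * L ^ (β - 4)))) :=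
      mul_pos (by linarith) (mul_pos (by linarith) (mul_pos (by linarith) (mul_pos hβ0 hA4)))
    linarith [t1, t2, t3, t4]
  linarith
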